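/- The rotation R_θ of ℝ² by angle θ is cyclically monotone (n-monotone for all n ≥ 2) if and only if θ = 0. -/

import Mathlib

/-- Counterclockwise rotation of `ℝ²` by angle `θ`. -/
noncomputable def rot (θ : ℝ) (x : ℝ × ℝ) : ℝ × ℝ :=
  (x.1 * Real.cos θ - x.2 * Real.sin θ, x.1 * Real.sin θ + x.2 * Real.cos θ)

/-- The Euclidean inner product on `ℝ²`. -/
def dot (a b : ℝ × ℝ) : ℝ := a.1 * b.1 + a.2 * b.2

lemma term_eq (θ c : ℝ) (i : ℕ) :
    dot ((Real.cos (c*i), Real.sin (c*i)) - (Real.cos (c*((i:ℝ)+1)), Real.sin (c*((i:ℝ)+1))))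
        (rot θ (Real.cos (c*i), Real.sin (c*i)))
      = Real.cos θ - Real.cos (c - θ) := by
  have h1 : c*((i:ℝ)+1) = c*i + c := by ring
  rw [h1]
  simp only [dot, rot, Prod.fst_sub, Prod.snd_sub, Real.cos_add, Real.sin_add, Real.cos_sub]
  linear_combination (Real.cos θ - Real.cos c * Real.cos θ - Real.sin c * Real.sin θ) * Real.sin_sq_add_cos_sq (c*i)

lemma key (θ : ℝ)
    (h : ∀ n : ℕ, 2 ≤ n → ∀ p : ℕ → ℝ × ℝ, p (n + 1) = p 1 →
        0 ≤ ∑ i ∈ Finset.Icc 1 n, dot (p i - p (i + 1)) (rot θ (p i)))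
    (n : ℕ) (hn : 2 ≤ n) (c : ℝ)
    (hc : c * n = 2 * Real.pi ∨ c * n = -(2 * Real.pi)) :
    Real.cos (c - θ) ≤ Real.cos θ := by
  set p : ℕ → ℝ × ℝ := fun i => (Real.cos (c * i), Real.sin (c * i)) with hp
  have hper : p (n + 1) = p 1 := by
    have h2 : c * (((n + 1 : ℕ)) : ℝ) = c + c * n := by push_cast; ring
    have h3 : c * ((1 : ℕ) : ℝ) = c := by norm_num
    rcases hc with hc | hc
    · simp only [hp]
      rw [h2, h3, hc, Real.cos_add_two_pi, Real.sin_add_two_pi]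
    · simp only [hp]
      rw [h2, h3, hc, show c + -(2 * Real.pi) = c - 2 * Real.pi by ring,
        Real.cos_sub_two_pi, Real.sin_sub_two_pi]
  have hsum := h n hn p hper
  have heach : ∀ i ∈ Finset.Icc 1 n,
      dot (p i - p (i + 1)) (rot θ (p i)) = Real.cos θ - Real.cos (c - θ) := by
    intro i _
    have := term_eq θ c i
    simpa [hp, Nat.cast_add, Nat.cast_one] using this
  rw [Finset.sum_congr rfl heach, Finset.sum_const, Nat.card_Icc, nsmul_eq_mul] at hsum
  have hn0 : 0 < ((n + 1 - 1 : ℕ) : ℝ) := by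
    have : 0 < n + 1 - 1 := by omega
    exact_mod_cast this
  nlinarith [hsum]

/-- The rotation `R_θ` (with `θ ∈ [-π, π]`) is cyclically monotone iff `θ = 0`. -/
theorem rotation_cyclically_monotone_iff (θ : ℝ)
    (hθ : θ ∈ Set.Icc (-Real.pi) Real.pi) :
    (∀ n : ℕ, 2 ≤ n → ∀ p : ℕ → ℝ × ℝ, p (n + 1) = p 1 →
        0 ≤ ∑ i ∈ Finset.Icc 1 n, dot (p i - p (i + 1)) (rot θ (p i)))
      ↔ θ = 0 := by
  constructor
  · intro h
    by_contra hne
    rcases lt_or_gt_of_ne hne with hlt | hgt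
    · -- θ < 0
      set φ : ℝ := -θ with hφ
      have hφ0 : 0 < φ := by simp [hφ]; linarith
      have hφπ : φ ≤ Real.pi := by simp [hφ]; linarith [hθ.1]
      set n : ℕ := ⌈Real.pi / φ⌉₊ + 2 with hndef
      have hn2 : 2 ≤ n := by omega
      have hnpos : (0:ℝ) < n := by positivity
      set c : ℝ := -(2 * Real.pi / n) with hcdef
      have hcn : c * n = -(2 * Real.pi) := by
        rw [hcdef, neg_mul, div_mul_cancel₀ _ hnpos.ne']
      have hkey := key θ h n hn2 c (Or.inr hcn)
      -- c - θ = φ - 2π/n, and |c - θ| < φ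
      have hngt : Real.pi / φ < (n : ℝ) := by
        have := Nat.le_ceil (Real.pi / φ)
        have : (⌈Real.pi / φ⌉₊ : ℝ) ≤ ((⌈Real.pi / φ⌉₊ + 2 : ℕ) : ℝ) - 1 := by
          push_cast; linarith
        have h2 := Nat.le_ceil (Real.pi / φ)
        calc Real.pi / φ ≤ (⌈Real.pi / φ⌉₊ : ℝ) := h2
          _ < (n : ℝ) := by rw [hndef]; push_cast; linarith
      have hblt : 2 * Real.pi / n < 2 * φ := by
        rw [div_lt_iff₀ hnpos]
        have := (div_lt_iff₀ hφ0).mp hngt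
        nlinarith
      have hbpos : 0 < 2 * Real.pi / n := by positivity
      have hceq : c - θ = φ - 2 * Real.pi / ↑n := by rw [hcdef, hφ]; ring
      have habs : |c - θ| < φ := by
        rw [abs_lt, hceq]
        constructor <;> linarith
      have hmem1 : |c - θ| ∈ Set.Icc 0 Real.pi := ⟨abs_nonneg _, by linarith⟩
      have hmem2 : φ ∈ Set.Icc 0 Real.pi := ⟨le_of_lt hφ0, hφπ⟩
      have hcos : Real.cos φ < Real.cos |c - θ| :=
        Real.strictAntiOn_cos hmem1 hmem2 habs
      rw [Real.cos_abs] at hcos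
      have : Real.cos θ = Real.cos φ := by rw [hφ, Real.cos_neg]
      linarith
    · -- θ > 0
      have hθπ : θ ≤ Real.pi := hθ.2
      set n : ℕ := ⌈Real.pi / θ⌉₊ + 2 with hndef
      have hn2 : 2 ≤ n := by omega
      have hnpos : (0:ℝ) < n := by positivity
      set c : ℝ := 2 * Real.pi / n with hcdef
      have hcn : c * n = 2 * Real.pi := by rw [hcdef, div_mul_cancel₀ _ hnpos.ne']
      have hkey := key θ h n hn2 c (Or.inl hcn)
      have hngt : Real.pi / θ < (n : ℝ) := by
        have h2 := Nat.le_ceil (Real.pi / θ)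
        calc Real.pi / θ ≤ (⌈Real.pi / θ⌉₊ : ℝ) := h2
          _ < (n : ℝ) := by rw [hndef]; push_cast; linarith
      have hblt : c < 2 * θ := by
        rw [hcdef, div_lt_iff₀ hnpos]
        have := (div_lt_iff₀ hgt).mp hngt
        nlinarith
      have hbpos : 0 < c := by rw [hcdef]; positivity
      have habs : |c - θ| < θ := by rw [abs_lt]; constructor <;> linarith
      have hmem1 : |c - θ| ∈ Set.Icc 0 Real.pi := ⟨abs_nonneg _, by linarith⟩
      have hmem2 : θ ∈ Set.Icc 0 Real.pi := ⟨le_of_lt hgt, hθπ⟩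
      have hcos : Real.cos θ < Real.cos |c - θ| :=
        Real.strictAntiOn_cos hmem1 hmem2 habs
      rw [Real.cos_abs] at hcos
      linarith
  · rintro rfl n hn p hp
    set f : ℕ → ℝ := fun i => (p i).1 ^ 2 + (p i).2 ^ 2 with hf
    set g : ℕ → ℝ := fun i =>
      ((p i).1 - (p (i+1)).1) ^ 2 + ((p i).2 - (p (i+1)).2) ^ 2 with hg
    have hterm : ∀ i ∈ Finset.Icc 1 n,
        dot (p i - p (i+1)) (rot 0 (p i)) = (f i - f (i+1)) / 2 + g i / 2 := by
      intro i _
      simp only [dot, rot, Prod.fst_sub, Prod.snd_sub, Real.cos_zero, Real.sin_zero,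
        hf, hg]
      ring
    have htel : ∀ q : ℕ → ℝ, ∑ i ∈ Finset.Icc 1 n, (q i - q (i+1)) = q 1 - q (n+1) := by
      intro q
      rw [show Finset.Icc 1 n = Finset.Ico 1 (n+1) by rw [Finset.Ico_add_one_right_eq_Icc],
        Finset.sum_Ico_eq_sum_range]
      simp only [Nat.add_sub_cancel]
      have h := Finset.sum_range_sub' (fun i => q (1 + i)) n
      simpa [Nat.add_comm, Nat.add_assoc, Nat.add_left_comm] using h
    rw [Finset.sum_congr rfl hterm, Finset.sum_add_distrib, ← Finset.sum_div,
      ← Finset.sum_div, htel f]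
    have hfp : f (n+1) = f 1 := by simp [hf, hp]
    rw [hfp]
    have hgnn : 0 ≤ ∑ i ∈ Finset.Icc 1 n, g i :=
      Finset.sum_nonneg fun i _ => by simp only [hg]; positivity
    linarith
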